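/- (WL-QLMS gradient) Let x, g, u, v ∈ ℍ^N and d ∈ ℍ be fixed, and for h ∈ ℍ^N define the widely linear output y(h) = Σ_n h_n* x_n + Σ_n g_n* x_n^i + Σ_n u_n* x_n^j + Σ_n v_n* x_n^k (i.e. y = h^H x + g^H x^i + u^H x^j + v^H x^k), the error e(h) = d − y(h), and the real-valued cost J(h) = e(h)* e(h) = |e(h)|². Then for every n the left GHR derivative of J with respect to the component h_n satisfies ∂J/∂h_n = −½ e(h) · x_n*, i.e. the row-vector gradient is D_h J = −½ e x^H. -/

import Mathlib

open scoped Quaternion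

noncomputable section

/-- The imaginary unit `i` of the quaternions. -/
def qI : ℍ[ℝ] := ⟨0, 1, 0, 0⟩
/-- The imaginary unit `j` of the quaternions. -/
def qJ : ℍ[ℝ] := ⟨0, 0, 1, 0⟩
/-- The imaginary unit `k` of the quaternions. -/
def qK : ℍ[ℝ] := ⟨0, 0, 0, 1⟩

/-- The quaternion involution `x^η = −η x η` (for a pure unit quaternion `η`). -/
def invo (η x : ℍ[ℝ]) : ℍ[ℝ] := -(η * x * η)

/-- Left GHR derivative `∂f/∂h_n` of a quaternion function of a quaternion vector variable,
with respect to the `n`-th component (the other components held fixed):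
`¼(∂f/∂a − (∂f/∂b) i − (∂f/∂c) j − (∂f/∂d) k)`, the partials being the real directional
(Fréchet) derivatives in directions `1, i, j, k` of the `n`-th coordinate. -/
def ghrV {N : ℕ} (f : (Fin N → ℍ[ℝ]) → ℍ[ℝ]) (w : Fin N → ℍ[ℝ]) (n : Fin N) : ℍ[ℝ] :=
  (1 / 4 : ℝ) • (fderiv ℝ f w (Pi.single n 1) - fderiv ℝ f w (Pi.single n qI) * qI
    - fderiv ℝ f w (Pi.single n qJ) * qJ - fderiv ℝ f w (Pi.single n qK) * qK)

/-- The widely linear output `y(h) = h^H x + g^H x^i + u^H x^j + v^H x^k`. -/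
def wlOutput {N : ℕ} (x g u v : Fin N → ℍ[ℝ]) (h : Fin N → ℍ[ℝ]) : ℍ[ℝ] :=
  (∑ n, star (h n) * x n) + (∑ n, star (g n) * invo qI (x n))
    + (∑ n, star (u n) * invo qJ (x n)) + (∑ n, star (v n) * invo qK (x n))

namespace WLQLMS

instance : StarModule ℝ ℍ[ℝ] :=
  ⟨fun r q => by ext <;> simp⟩

instance : ContinuousStar ℍ[ℝ] :=
  ⟨(Isometry.of_dist_eq fun a b => by
      rw [dist_eq_norm, dist_eq_norm, ← star_sub, Quaternion.norm_star]).continuous⟩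


/-- The linear part of the widely linear output as a continuous linear map. -/
def L {N : ℕ} (x : Fin N → ℍ[ℝ]) : (Fin N → ℍ[ℝ]) →L[ℝ] ℍ[ℝ] :=
  ∑ n, ((ContinuousLinearMap.mul ℝ ℍ[ℝ]).flip (x n)).comp
    (((starL' ℝ : ℍ[ℝ] ≃L[ℝ] ℍ[ℝ]) : ℍ[ℝ] →L[ℝ] ℍ[ℝ]).comp (ContinuousLinearMap.proj n))

lemma L_apply {N : ℕ} (x : Fin N → ℍ[ℝ]) (w : Fin N → ℍ[ℝ]) :
    L x w = ∑ n, star (w n) * x n := by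
  simp [L, ContinuousLinearMap.sum_apply]

lemma L_single {N : ℕ} (x : Fin N → ℍ[ℝ]) (n : Fin N) (q : ℍ[ℝ]) :
    L x (Pi.single n q) = star q * x n := by
  rw [L_apply, Finset.sum_eq_single n]
  · simp
  · intro m _ hm
    simp [Pi.single_eq_of_ne hm]
  · simp

lemma qI_re : qI.re = 0 := rfl
lemma qI_imI : qI.imI = 1 := rfl
lemma qI_imJ : qI.imJ = 0 := rfl
lemma qI_imK : qI.imK = 0 := rfl
lemma qJ_re : qJ.re = 0 := rfl
lemma qJ_imI : qJ.imI = 0 := rfl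
lemma qJ_imJ : qJ.imJ = 1 := rfl
lemma qJ_imK : qJ.imK = 0 := rfl
lemma qK_re : qK.re = 0 := rfl
lemma qK_imI : qK.imI = 0 := rfl
lemma qK_imJ : qK.imJ = 0 := rfl
lemma qK_imK : qK.imK = 1 := rfl

set_option maxHeartbeats 1000000 in
lemma key (e xn : ℍ[ℝ]) :
    (1 / 4 : ℝ) • ((star e * -(star (1:ℍ[ℝ]) * xn) + star (-(star (1:ℍ[ℝ]) * xn)) * e)
      - (star e * -(star qI * xn) + star (-(star qI * xn)) * e) * qI
      - (star e * -(star qJ * xn) + star (-(star qJ * xn)) * e) * qJ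
      - (star e * -(star qK * xn) + star (-(star qK * xn)) * e) * qK)
    = -(1 / 2 : ℍ[ℝ]) * (e * star xn) := by
  have h22 : ((2:ℝ) : ℍ[ℝ]) = 2 := by
    rw [show (2:ℝ) = ((2:ℕ):ℝ) by norm_num, Quaternion.coe_natCast]; norm_num
  have h2 : -(1/2 : ℍ[ℝ]) = ((-(1/2) : ℝ) : ℍ[ℝ]) := by
    rw [Quaternion.coe_neg, Quaternion.coe_div, Quaternion.coe_one, h22]
  rw [h2, Quaternion.coe_mul_eq_smul]
  ext <;>
    simp only [qI_re, qI_imI, qI_imJ, qI_imK, qJ_re, qJ_imI, qJ_imJ, qJ_imK, qK_re, qK_imI, qK_imJ, qK_imK,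
        Quaternion.re_smul, Quaternion.imI_smul, Quaternion.imJ_smul,
      Quaternion.imK_smul, Quaternion.re_mul, Quaternion.imI_mul, Quaternion.imJ_mul,
      Quaternion.imK_mul, Quaternion.re_star, Quaternion.imI_star, Quaternion.imJ_star,
      Quaternion.imK_star, Quaternion.re_neg, Quaternion.imI_neg, Quaternion.imJ_neg,
      Quaternion.imK_neg, Quaternion.re_add, Quaternion.imI_add, Quaternion.imJ_add,
      Quaternion.imK_add, Quaternion.re_sub, Quaternion.imI_sub, Quaternion.imJ_sub,
      Quaternion.imK_sub, Quaternion.re_one, Quaternion.imI_one, Quaternion.imJ_one,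
      Quaternion.imK_one, smul_eq_mul] <;>
    ring

end WLQLMS

/-- **WL-QLMS gradient**: for the cost `J(h) = e(h)* e(h)` with `e(h) = d − y(h)` and the
widely linear output `y(h) = h^H x + g^H x^i + u^H x^j + v^H x^k`, the GHR derivative with
respect to each component is `∂J/∂h_n = −½ e(h) x_n*`. -/
theorem wlqlms_gradient {N : ℕ} (x g u v : Fin N → ℍ[ℝ]) (d : ℍ[ℝ]) (h : Fin N → ℍ[ℝ]) :
    ∀ n : Fin N,
      ghrV (fun w => star (d - wlOutput x g u v w) * (d - wlOutput x g u v w)) h n =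
        -(1 / 2 : ℍ[ℝ]) * ((d - wlOutput x g u v h) * star (x n)) := by
  intro n
  set c : ℍ[ℝ] := (∑ m, star (g m) * invo qI (x m)) + (∑ m, star (u m) * invo qJ (x m))
    + (∑ m, star (v m) * invo qK (x m)) with hc
  have hfun : ∀ w, d - wlOutput x g u v w = (d - c) - WLQLMS.L x w := by
    intro w
    rw [WLQLMS.L_apply, wlOutput, hc]
    abel
  have he : HasFDerivAt (fun w => d - wlOutput x g u v w) (-(WLQLMS.L x)) h := by
    have h1 : HasFDerivAt (fun w => (d - c) - WLQLMS.L x w) (-(WLQLMS.L x)) h :=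
      ((WLQLMS.L x).hasFDerivAt).const_sub (d - c)
    exact h1.congr_of_eventuallyEq (Filter.Eventually.of_forall fun w => (hfun w))
  have hs : HasFDerivAt (fun w => star (d - wlOutput x g u v w))
      (((starL' ℝ : ℍ[ℝ] ≃L[ℝ] ℍ[ℝ]) : ℍ[ℝ] →L[ℝ] ℍ[ℝ]) ∘L (-(WLQLMS.L x))) h := he.star
  have hmul := hs.mul' he
  have hfd : fderiv ℝ (fun w => star (d - wlOutput x g u v w) * (d - wlOutput x g u v w)) h = _ :=
    hmul.fderiv
  rw [ghrV, hfd]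
  simp only [ContinuousLinearMap.add_apply, ContinuousLinearMap.smul_apply,
    ContinuousLinearMap.smulRight_apply, ContinuousLinearMap.coe_comp', Function.comp_apply,
    ContinuousLinearMap.neg_apply, WLQLMS.L_single, starL'_apply, smul_eq_mul, star_neg]
  exact WLQLMS.key (d - wlOutput x g u v h) (x n)
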